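/- For an integer k > 1, the function G(r) = ((1 − r^{k+1})/(1 − r))^2 · (1/(1+r))^{2k} is monotonically non-increasing on the interval [(2k−1)/(2k+1), 1). -/

import Mathlib

lemma key_ineq (k : ℕ) (r : ℝ) (h0 : 0 ≤ r) (h1 : r ≤ 1) :
    (k:ℝ) * (r^k + 1) * (r - 1) ≤ (r + 1) * (r^k - 1) := by
  set T : ℝ := ∑ i ∈ Finset.range k, r ^ i with hT
  have hgeom : (1 - r) * T = 1 - r ^ k := by
    have := geom_sum_mul r k
    rw [hT]; linarith [this]
  have hrefl : ∑ i ∈ Finset.range k, r ^ (k - i) = r * T := by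
    rw [← Finset.sum_range_reflect (fun i => r ^ (k - i)) k, hT, Finset.mul_sum]
    apply Finset.sum_congr rfl
    intro i hi
    rw [Finset.mem_range] at hi
    have : k - (k - 1 - i) = i + 1 := by omega
    rw [this, pow_succ, mul_comm]
  have hexp : ∑ i ∈ Finset.range k, (1 - r ^ i) * (1 - r ^ (k - i))
      = (k:ℝ) * (1 + r ^ k) - (1 + r) * T := by
    have h1' : ∀ i ∈ Finset.range k, (1 - r ^ i) * (1 - r ^ (k - i))
        = (1 + r ^ k) - r ^ i - r ^ (k - i) := by
      intro i hi
      rw [Finset.mem_range] at hi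
      have : r ^ i * r ^ (k - i) = r ^ k := by
        rw [← pow_add]; congr 1; omega
      nlinarith [this]
    rw [Finset.sum_congr rfl h1']
    rw [Finset.sum_sub_distrib, Finset.sum_sub_distrib, Finset.sum_const,
      Finset.card_range, hrefl, nsmul_eq_mul, hT]
    ring
  have hS : 0 ≤ ∑ i ∈ Finset.range k, (1 - r ^ i) * (1 - r ^ (k - i)) := by
    apply Finset.sum_nonneg
    intro i _
    have := pow_le_one₀ h0 h1 (n := i)
    have := pow_le_one₀ h0 h1 (n := k - i)
    nlinarith
  rw [hexp] at hS
  nlinarith [mul_nonneg (by linarith : (0:ℝ) ≤ 1 - r) hS, hgeom]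

/-- For an integer `k > 1`, the function
`G(r) = ((1 − r^(k+1))/(1 − r))^2 · (1/(1+r))^(2k)` is monotonically non-increasing
on `[(2k−1)/(2k+1), 1)`. -/
theorem stmt_10 (k : ℕ) (hk : 1 < k) :
    AntitoneOn
      (fun r : ℝ => ((1 - r ^ (k + 1)) / (1 - r)) ^ 2 * (1 / (1 + r)) ^ (2 * k))
      (Set.Ico ((2 * (k:ℝ) - 1) / (2 * (k:ℝ) + 1)) 1) := by
  have hk2 : (2:ℝ) ≤ (k:ℝ) := by exact_mod_cast hk
  set a : ℝ := (2 * (k:ℝ) - 1) / (2 * (k:ℝ) + 1) with ha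
  have ha0 : 0 ≤ a := by
    apply div_nonneg <;> linarith
  have hint : interior (Set.Ico a (1:ℝ)) = Set.Ioo a 1 := interior_Ico
  -- derivative at interior points
  have hder : ∀ x ∈ Set.Ioo a (1:ℝ), HasDerivAt
      (fun r : ℝ => ((1 - r ^ (k + 1)) / (1 - r)) ^ 2 * (1 / (1 + r)) ^ (2 * k))
      ((2 * (1 - x ^ (k+1)) * ((k:ℝ) * (x^k + 1) * (x - 1) - (x + 1) * (x^k - 1)))
        / ((1 - x)^3 * (1 + x)^(2*k+1))) x := by
    intro x hx
    obtain ⟨hxa, hx1⟩ := hx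
    have hx0 : 0 ≤ x := le_trans ha0 hxa.le
    have hv : (1 : ℝ) - x ≠ 0 := by linarith
    have hw : (1 : ℝ) + x ≠ 0 := by linarith
    have hu : HasDerivAt (fun y : ℝ => 1 - y ^ (k+1)) (-((k+1 : ℝ) * x ^ k)) x := by
      simpa using ((hasDerivAt_pow (k+1) x).const_sub 1)
    have hv' : HasDerivAt (fun y : ℝ => 1 - y) (-1 : ℝ) x := by
      simpa using ((hasDerivAt_id x).const_sub 1)
    have hq : HasDerivAt (fun y : ℝ => (1 - y ^ (k+1)) / (1 - y))
        ((-((k+1 : ℝ) * x ^ k) * (1 - x) - (1 - x ^ (k+1)) * (-1)) / (1 - x)^2) x :=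
      hu.div hv' hv
    have hq2 := hq.pow 2
    have hw1 : HasDerivAt (fun y : ℝ => 1 + y) (1 : ℝ) x := by
      simpa using ((hasDerivAt_id x).const_add 1)
    have hwd : HasDerivAt (fun y : ℝ => 1 / (1 + y))
        ((0 * (1 + x) - 1 * 1) / (1 + x)^2) x :=
      (hasDerivAt_const x 1).div hw1 hw
    have hwk := hwd.pow (2*k)
    have hmul := hq2.mul hwk
    refine hmul.congr_deriv ?_
    have hk1 : 2 * k - 1 + 1 = 2 * k := by omega
    have hpow : ((1:ℝ) / (1 + x)) ^ (2*k) = (1/(1+x)) ^ (2*k-1) * (1/(1+x)) := by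
      rw [← pow_succ, hk1]
    simp only [Pi.pow_apply, Nat.cast_ofNat, Nat.cast_mul, one_div, inv_pow, Nat.reduceSub, pow_one]; field_simp
    have e1 : ((1:ℝ)+x)^(2*k) = (1+x)^(2*k-1) * (1+x) := by rw [← pow_succ, hk1]
    have e2 : ((1:ℝ)+x)^(2*k+1) = (1+x)^(2*k-1) * (1+x)^2 := by
      rw [← pow_add]; congr 1; omega
    rw [e1, e2]; ring
  apply antitoneOn_of_deriv_nonpos (convex_Ico a 1)
  · -- continuity
    apply ContinuousOn.mul
    · apply ContinuousOn.pow
      apply ContinuousOn.div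
      · fun_prop
      · fun_prop
      · intro x hx
        have := hx.2
        simp only [Set.mem_Ico] at hx
        intro h; linarith [hx.2, sub_eq_zero.mp h]
    · apply ContinuousOn.pow
      apply ContinuousOn.div
      · fun_prop
      · fun_prop
      · intro x hx
        simp only [Set.mem_Ico] at hx
        have : 0 ≤ x := le_trans ha0 hx.1
        intro h; nlinarith [h]
  · rw [hint]
    intro x hx
    exact ((hder x hx).differentiableAt).differentiableWithinAt
  · rw [hint]
    intro x hx
    rw [(hder x hx).deriv]
    obtain ⟨hxa, hx1⟩ := hx
    have hx0 : 0 ≤ x := le_trans ha0 hxa.le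
    apply div_nonpos_of_nonpos_of_nonneg
    · have h1 : 0 ≤ 1 - x ^ (k+1) := by
        have := pow_le_one₀ hx0 hx1.le (n := k+1)
        linarith
      have h2 : (k:ℝ) * (x^k + 1) * (x - 1) - (x + 1) * (x^k - 1) ≤ 0 := by
        have := key_ineq k x hx0 hx1.le
        linarith
      nlinarith
    · have : (0:ℝ) ≤ 1 - x := by linarith
      positivity
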